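/- Let M(κ,τ) be a Riemannian Killing submersion with κ − 4τ² > 0 and let Σ be a strongly stable compact orientable surface of genus g and constant mean curvature H immersed in M(κ,τ). Then H² < 2π(1−g)/Area(Σ) + (1/(4 Area(Σ))) ∫_Σ (|∇τ| − κ), and this inequality is always strict. -/

import Mathlib

open MeasureTheory

noncomputable section

/-- Abstract model of a compact orientable surface `Σ` of constant mean curvature
`H` immersed in a Riemannian Killing submersion `M(κ,τ)` (a Riemannian submersion
`π : M → B` of an oriented Riemannian 3-manifold over a surface `B`, whose vertical
unit vector field `ξ` is a unit Killing field, with bundle curvature `τ : M → ℝ`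
determined by `∇̄_E ξ = τ (E ∧ ξ)` and base Gaussian curvature `κ`).  Along `Σ`
(with its area measure `μ`) we record: the restrictions of `τ` and `κ`, the norm
`|∇τ|` of the ambient gradient of `τ`, the angle function `ν = ⟨N, ξ⟩` of the unit
normal `N`, the Gaussian curvature `K` of `Σ`, the ambient sectional curvature
`K̄_Σ` of the tangent plane, the squared norm `|A|²` of the shape operator, the
Ricci curvature `Ric(N,N)` of `M` in the normal direction, the Laplacian and the
intrinsic gradient of `Σ`, and the first eigenvalue `λ₁` of the Jacobi (stability)
operator `J = Δ + |A|² + Ric(N,N)`; together with the structural relations between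
them: the expressions of `Ric(N,N)` and of `K̄_Σ` in a Killing submersion (in terms
of a horizontal direction `X` of an adapted frame), the Gauss equation, the
Gauss–Bonnet theorem, the existence of a positive first eigenfunction and the
min-max characterization of `λ₁` evaluated on the constant test function. -/
structure CMCSurfaceInKillingSubmersion where
  /-- the points of the surface `Σ` -/
  carrier : Type
  /-- the Borel σ-algebra of `Σ` -/
  [mble : MeasurableSpace carrier]
  /-- the area measure of `Σ` -/
  μ : Measure carrier
  /-- `Σ` is compact, so it has finite area -/
  finite : IsFiniteMeasure μ
  area_pos : 0 < (μ Set.univ).toReal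
  /-- the genus of `Σ` -/
  genus : ℕ
  /-- the (constant) mean curvature of `Σ` -/
  H : ℝ
  /-- the bundle curvature `τ` of `M(κ,τ)`, restricted to `Σ` -/
  τ : carrier → ℝ
  /-- `|∇τ|`, the norm of the gradient of `τ`, restricted to `Σ` -/
  gradτNorm : carrier → ℝ
  gradτNorm_nonneg : ∀ x, 0 ≤ gradτNorm x
  /-- the Gaussian curvature `κ` of the base `B`, pulled back to `Σ` -/
  κ : carrier → ℝ
  /-- the angle function `ν = ⟨N, ξ⟩` -/
  ν : carrier → ℝ
  ν_sq_le_one : ∀ x, ν x ^ 2 ≤ 1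
  /-- the Gaussian curvature `K` of `Σ` -/
  K : carrier → ℝ
  /-- `K̄_Σ`, the ambient sectional curvature of the tangent plane of `Σ` -/
  KsecAmb : carrier → ℝ
  /-- `|A|²`, the squared norm of the shape operator `A` of `Σ` -/
  normAsq : carrier → ℝ
  /-- `Ric(N,N)`, the ambient Ricci curvature in the unit normal direction `N` -/
  Ric : carrier → ℝ
  /-- `X(τ)`, the derivative of `τ` along the horizontal direction `X` of an
  adapted frame along `Σ` -/
  Xτ : carrier → ℝ
  Xτ_le : ∀ x, |Xτ x| ≤ gradτNorm x
  /-- the expression of `Ric(N,N)` in a Killing submersion -/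
  ric_formula : ∀ x, Ric x =
    κ x - 2 * τ x ^ 2 - ν x ^ 2 * (κ x - 4 * τ x ^ 2)
      + 2 * ν x * Real.sqrt (1 - ν x ^ 2) * Xτ x
  /-- the expression of `K̄_Σ` in a Killing submersion -/
  sec_formula : ∀ x, KsecAmb x =
    τ x ^ 2 + ν x ^ 2 * (κ x - 4 * τ x ^ 2)
      - 2 * ν x * Real.sqrt (1 - ν x ^ 2) * Xτ x
  /-- the Gauss equation `|A|² = 2(2H² + K̄_Σ − K)` -/
  gauss_equation : ∀ x, normAsq x = 2 * (2 * H ^ 2 + KsecAmb x - K x)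
  /-- `|φ|² = |A|² − 2H² ≥ 0`, `φ` being the total umbilicity tensor -/
  normAsq_ge : ∀ x, 2 * H ^ 2 ≤ normAsq x
  /-- the Gauss–Bonnet theorem -/
  gauss_bonnet : ∫ x, K x ∂μ = 4 * Real.pi * (1 - (genus : ℝ))
  /-- the Laplacian `Δ` of `Σ` -/
  lap : (carrier → ℝ) → carrier → ℝ
  /-- the squared norm `|∇f|²` of the intrinsic gradient on `Σ` -/
  gradSq : (carrier → ℝ) → carrier → ℝ
  gradSq_nonneg : ∀ f x, 0 ≤ gradSq f x
  /-- the first eigenvalue of the Jacobi operator `J = Δ + |A|² + Ric(N,N)` -/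
  lambda₁ : ℝ
  /-- `λ₁` admits a positive eigenfunction `ρ`: `Δρ = −(λ₁ + |A|² + Ric(N,N))ρ` -/
  exists_eigenfun : ∃ ρ : carrier → ℝ, (∀ x, 0 < ρ x) ∧
    ∀ x, lap ρ x = -(lambda₁ + normAsq x + Ric x) * ρ x
  /-- the min-max characterization of `λ₁` applied to the test function `f = 1` -/
  lambda₁_le : lambda₁ * (μ Set.univ).toReal ≤ - ∫ x, (normAsq x + Ric x) ∂μ
  integr_normAsq : Integrable normAsq μ
  integr_Ric : Integrable Ric μ
  integr_K : Integrable K μ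
  integr_Ksec : Integrable KsecAmb μ
  integr_kappa : Integrable κ μ
  integr_tau_sq : Integrable (fun x => τ x ^ 2) μ
  integr_gradτ : Integrable gradτNorm μ

attribute [instance] CMCSurfaceInKillingSubmersion.mble
  CMCSurfaceInKillingSubmersion.finite

namespace CMCSurfaceInKillingSubmersion

variable (S : CMCSurfaceInKillingSubmersion)

/-- the area of `Σ` -/
def area : ℝ := (S.μ Set.univ).toReal

/-- `Σ` is a horizontal surface: its angle function satisfies `ν² ≡ 1`. -/
def IsHorizontal : Prop := ∀ x, S.ν x ^ 2 = 1

/-- `Σ` is a Hopf torus, i.e. the total lift `π⁻¹(γ)` of a closed curve `γ` in the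
base (of constant geodesic curvature, since `Σ` has constant mean curvature):
this is characterized by the vanishing of the angle function, `ν ≡ 0`, together
with `Σ` being a torus. -/
def IsHopfTorus : Prop := (∀ x, S.ν x = 0) ∧ S.genus = 1

/-- `Σ` is strongly stable: `λ₁ ≥ 0`. -/
def StronglyStable : Prop := 0 ≤ S.lambda₁

/-- the Jacobi (stability) operator `J = Δ + |A|² + Ric(N,N)` of `Σ` -/
def jacobi (f : S.carrier → ℝ) (x : S.carrier) : ℝ :=
  S.lap f x + (S.normAsq x + S.Ric x) * f x

/-- `ρ` is a (positive) first eigenfunction of the Jacobi operator: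
`Jρ = −λ₁ρ`, i.e. `Δρ = −(λ₁ + |A|² + Ric(N,N))ρ`, with `ρ > 0`. -/
def IsFirstEigenfunction (ρ : S.carrier → ℝ) : Prop :=
  (∀ x, 0 < ρ x) ∧ ∀ x, S.lap ρ x = -(S.lambda₁ + S.normAsq x + S.Ric x) * ρ x

end CMCSurfaceInKillingSubmersion

/-- Corollary, case `κ − 4τ² > 0`, (ii).  Let `M(κ,τ)` be a
Riemannian Killing submersion with `κ − 4τ² > 0` and `Σ` a strongly stable
compact orientable surface of genus `g` and constant mean curvature `H` immersed
in `M(κ,τ)`.  Then `H² < 2π(1−g)/Area(Σ) + (1/(4 Area(Σ))) ∫_Σ (|∇τ| − κ)`,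
and this inequality is always strict. -/
theorem stable_H_bound_pos_ii (S : CMCSurfaceInKillingSubmersion)
    (hpos : ∀ x, 0 < S.κ x - 4 * S.τ x ^ 2)
    (hstab : S.StronglyStable) :
    S.H ^ 2 < 2 * Real.pi * (1 - (S.genus : ℝ)) / S.area
      + (1 / (4 * S.area)) * ∫ x, (S.gradτNorm x - S.κ x) ∂S.μ := by
  classical
  by_contra hcon
  push_neg at hcon
  set μ := S.μ with hμ
  have hA : 0 < S.area := S.area_pos
  set A : ℝ := S.area with hAdef
  -- pointwise facts
  have hsqrt_sq : ∀ x, Real.sqrt (1 - S.ν x ^ 2) ^ 2 = 1 - S.ν x ^ 2 := fun x =>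
    Real.sq_sqrt (by linarith [S.ν_sq_le_one x])
  have P5 : ∀ x, 2 * S.ν x * Real.sqrt (1 - S.ν x ^ 2) * S.Xτ x ≤ S.gradτNorm x := by
    intro x
    have h1 : 2 * S.ν x * Real.sqrt (1 - S.ν x ^ 2) * S.Xτ x
        ≤ |2 * S.ν x * Real.sqrt (1 - S.ν x ^ 2) * S.Xτ x| := le_abs_self _
    have h2 : |2 * S.ν x * Real.sqrt (1 - S.ν x ^ 2) * S.Xτ x|
        = (2 * |S.ν x| * Real.sqrt (1 - S.ν x ^ 2)) * |S.Xτ x| := by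
      rw [abs_mul, abs_mul, abs_mul]
      rw [abs_of_nonneg (Real.sqrt_nonneg _)]
      norm_num
    have h3 : 2 * |S.ν x| * Real.sqrt (1 - S.ν x ^ 2) ≤ 1 := by
      nlinarith [sq_nonneg (|S.ν x| - Real.sqrt (1 - S.ν x ^ 2)), hsqrt_sq x,
        sq_abs (S.ν x)]
    have h4 : (2 * |S.ν x| * Real.sqrt (1 - S.ν x ^ 2)) * |S.Xτ x| ≤ 1 * |S.Xτ x| :=
      mul_le_mul_of_nonneg_right h3 (abs_nonneg _)
    have h5 := S.Xτ_le x
    calc 2 * S.ν x * Real.sqrt (1 - S.ν x ^ 2) * S.Xτ x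
        ≤ (2 * |S.ν x| * Real.sqrt (1 - S.ν x ^ 2)) * |S.Xτ x| := by rw [← h2]; exact h1
      _ ≤ 1 * |S.Xτ x| := h4
      _ ≤ S.gradτNorm x := by rw [one_mul]; exact h5
  -- φ := 2 K̄ + Ric − κ + |∇τ| ≥ 0
  set φ : S.carrier → ℝ :=
    fun x => 2 * S.KsecAmb x + S.Ric x - S.κ x + S.gradτNorm x with hφdef
  have P3 : ∀ x, φ x = S.ν x ^ 2 * (S.κ x - 4 * S.τ x ^ 2)
      - 2 * S.ν x * Real.sqrt (1 - S.ν x ^ 2) * S.Xτ x + S.gradτNorm x := by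
    intro x
    simp only [hφdef, S.ric_formula x, S.sec_formula x]
    ring
  have Pν : ∀ x, 0 ≤ S.ν x ^ 2 * (S.κ x - 4 * S.τ x ^ 2) := fun x =>
    mul_nonneg (sq_nonneg _) (le_of_lt (hpos x))
  have hφnonneg : ∀ x, 0 ≤ φ x := by
    intro x
    have := P5 x
    have := Pν x
    rw [P3 x]
    linarith
  have P7 : ∀ x, φ x = 0 → S.ν x = 0 ∧ S.gradτNorm x = 0 := by
    intro x h0
    have h3 := P5 x
    have h4 := Pν x
    have hν2 : S.ν x ^ 2 * (S.κ x - 4 * S.τ x ^ 2) = 0 := by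
      rw [P3 x] at h0; linarith
    have hν : S.ν x = 0 := by
      have hc' := hpos x
      have hsq : S.ν x ^ 2 = 0 := by
        rcases mul_eq_zero.mp hν2 with h | h
        · exact h
        · linarith
      exact pow_eq_zero_iff (n := 2) (by norm_num) |>.mp hsq
    refine ⟨hν, ?_⟩
    rw [P3 x, hν] at h0
    simpa using h0
  -- K ≤ H² + K̄ pointwise
  have P8 : ∀ x, S.K x ≤ S.H ^ 2 + S.KsecAmb x := by
    intro x
    have h1 := S.normAsq_ge x
    have h2 := S.gauss_equation x
    linarith
  -- integrability
  have hφint : Integrable φ μ :=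
    (((S.integr_Ksec.const_mul 2).add S.integr_Ric).sub S.integr_kappa).add S.integr_gradτ
  have hg3int : Integrable (fun x => 2 * S.KsecAmb x + S.Ric x) μ :=
    (S.integr_Ksec.const_mul 2).add S.integr_Ric
  have hconst : ∀ c : ℝ, (∫ _ : S.carrier, c ∂μ) = A * c := by
    intro c
    rw [integral_const]
    simp [hAdef, CMCSurfaceInKillingSubmersion.area, smul_eq_mul, hμ, measureReal_def]
  -- E1 : ∫ (|A|²+Ric) = 4H²A − 8π(1−g) + ∫ (2K̄+Ric)
  have hFeq : (fun x => S.normAsq x + S.Ric x)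
      = fun x => (4 * S.H ^ 2 - 2 * S.K x) + (2 * S.KsecAmb x + S.Ric x) := by
    funext x
    have := S.gauss_equation x
    linarith
  have hint1 : Integrable (fun x => 4 * S.H ^ 2 - 2 * S.K x) μ :=
    (integrable_const _).sub (S.integr_K.const_mul 2)
  have s1 : (∫ x, ((4 * S.H ^ 2 - 2 * S.K x) + (2 * S.KsecAmb x + S.Ric x)) ∂μ)
      = (∫ x, (4 * S.H ^ 2 - 2 * S.K x) ∂μ) + ∫ x, (2 * S.KsecAmb x + S.Ric x) ∂μ :=
    integral_add hint1 hg3int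
  have s2 : (∫ x, (4 * S.H ^ 2 - 2 * S.K x) ∂μ)
      = (∫ _ : S.carrier, (4 * S.H ^ 2 : ℝ) ∂μ) - ∫ x, 2 * S.K x ∂μ :=
    integral_sub (integrable_const _) (S.integr_K.const_mul 2)
  have s3 : (∫ x, 2 * S.K x ∂μ) = 2 * ∫ x, S.K x ∂μ := integral_const_mul 2 _
  have E1 : (∫ x, (S.normAsq x + S.Ric x) ∂μ)
      = 4 * S.H ^ 2 * A - 8 * Real.pi * (1 - (S.genus : ℝ))
        + ∫ x, (2 * S.KsecAmb x + S.Ric x) ∂μ := by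
    rw [hFeq, s1, s2, s3, S.gauss_bonnet, hconst]
    ring
  -- E2 : ∫ (2K̄+Ric) = ∫κ − ∫|∇τ| + ∫φ
  have hg3eq : (fun x => 2 * S.KsecAmb x + S.Ric x)
      = fun x => (S.κ x - S.gradτNorm x) + φ x := by
    funext x; simp only [hφdef]; ring
  have s4 : (∫ x, ((S.κ x - S.gradτNorm x) + φ x) ∂μ)
      = (∫ x, (S.κ x - S.gradτNorm x) ∂μ) + ∫ x, φ x ∂μ :=
    integral_add (S.integr_kappa.sub S.integr_gradτ) hφint
  have s5 : (∫ x, (S.κ x - S.gradτNorm x) ∂μ)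
      = (∫ x, S.κ x ∂μ) - ∫ x, S.gradτNorm x ∂μ :=
    integral_sub S.integr_kappa S.integr_gradτ
  have E2 : (∫ x, (2 * S.KsecAmb x + S.Ric x) ∂μ)
      = (∫ x, S.κ x ∂μ) - (∫ x, S.gradτNorm x ∂μ) + ∫ x, φ x ∂μ := by
    rw [hg3eq, s4, s5]
  -- stability : ∫ (|A|²+Ric) ≤ 0
  have hF : (∫ x, (S.normAsq x + S.Ric x) ∂μ) ≤ 0 := by
    have h1 := S.lambda₁_le
    have h2 : 0 ≤ S.lambda₁ * (S.μ Set.univ).toReal :=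
      mul_nonneg hstab (ENNReal.toReal_nonneg)
    simp only [← hμ] at h1 h2
    linarith
  have hGK : (∫ x, (S.gradτNorm x - S.κ x) ∂μ)
      = (∫ x, S.gradτNorm x ∂μ) - ∫ x, S.κ x ∂μ :=
    integral_sub S.integr_gradτ S.integr_kappa
  set G : ℝ := ∫ x, S.gradτNorm x ∂μ with hGdef
  set Kp : ℝ := ∫ x, S.κ x ∂μ with hKpdef
  rw [E1, E2] at hF
  -- negation of the goal, cleared of divisions
  have h4 : 8 * Real.pi * (1 - (S.genus : ℝ)) + (G - Kp) ≤ 4 * S.H ^ 2 * A := by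
    have hc : 2 * Real.pi * (1 - (S.genus : ℝ)) / A + 1 / (4 * A) * (G - Kp)
        ≤ S.H ^ 2 := by
      rw [hGK] at hcon
      exact hcon
    have hA' : A ≠ 0 := ne_of_gt hA
    have hmul := mul_le_mul_of_nonneg_right hc (by positivity : (0:ℝ) ≤ 4 * A)
    have e1 : 2 * Real.pi * (1 - (S.genus : ℝ)) / A * (4 * A)
        = 8 * Real.pi * (1 - (S.genus : ℝ)) := by
      field_simp
      ring
    have e2 : 1 / (4 * A) * (G - Kp) * (4 * A) = G - Kp := by
      field_simp
    rw [add_mul, e1, e2] at hmul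
    have e3 : S.H ^ 2 * (4 * A) = 4 * S.H ^ 2 * A := by ring
    linarith [hmul, e3.le, e3.ge]
  -- deduce ∫ φ ≤ 0 hence = 0 hence φ = 0 a.e.
  have hφle : (∫ x, φ x ∂μ) ≤ 0 := by linarith
  have hφ0 : (∫ x, φ x ∂μ) = 0 :=
    le_antisymm hφle (integral_nonneg hφnonneg)
  have hφae : φ =ᵐ[μ] 0 :=
    (integral_eq_zero_iff_of_nonneg hφnonneg hφint).mp hφ0
  have hνae : ∀ᵐ x ∂μ, S.ν x = 0 ∧ S.gradτNorm x = 0 :=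
    hφae.mono fun x hx => P7 x hx
  -- consequences
  have hKsec_ae : (fun x => S.KsecAmb x) =ᵐ[μ] fun x => S.τ x ^ 2 := by
    refine hνae.mono fun x hx => ?_
    show S.KsecAmb x = S.τ x ^ 2
    rw [S.sec_formula x, hx.1]
    ring
  have hG0 : G = 0 := by
    rw [hGdef]
    rw [integral_eq_zero_iff_of_nonneg S.gradτNorm_nonneg S.integr_gradτ]
    exact hνae.mono fun x hx => hx.2
  have hKsecint : (∫ x, S.KsecAmb x ∂μ) = ∫ x, S.τ x ^ 2 ∂μ :=
    integral_congr_ae hKsec_ae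
  set T : ℝ := ∫ x, S.τ x ^ 2 ∂μ with hTdef
  have hTnonneg : 0 ≤ T := integral_nonneg fun x => sq_nonneg _
  -- (i) : 4π(1−g) ≤ H²A + T
  have hi : 4 * Real.pi * (1 - (S.genus : ℝ)) ≤ S.H ^ 2 * A + T := by
    have hmono : (∫ x, S.K x ∂μ) ≤ ∫ x, (S.H ^ 2 + S.KsecAmb x) ∂μ :=
      integral_mono S.integr_K ((integrable_const _).add S.integr_Ksec) P8
    have s6 : (∫ x, (S.H ^ 2 + S.KsecAmb x) ∂μ)
        = (∫ _ : S.carrier, (S.H ^ 2 : ℝ) ∂μ) + ∫ x, S.KsecAmb x ∂μ :=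
      integral_add (integrable_const _) S.integr_Ksec
    rw [S.gauss_bonnet, s6, hconst, hKsecint] at hmono
    linarith
  -- (ii) : 4H²A ≤ 8π(1−g) − Kp
  have hii : 4 * S.H ^ 2 * A ≤ 8 * Real.pi * (1 - (S.genus : ℝ)) - Kp := by
    linarith
  -- positivity of ∫ (κ − 4τ²)
  have hKpT : 4 * T < Kp := by
    have hint : Integrable (fun x => S.κ x - 4 * S.τ x ^ 2) μ :=
      S.integr_kappa.sub (S.integr_tau_sq.const_mul 4)
    have s7 : (∫ x, (S.κ x - 4 * S.τ x ^ 2) ∂μ)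
        = (∫ x, S.κ x ∂μ) - ∫ x, 4 * S.τ x ^ 2 ∂μ :=
      integral_sub S.integr_kappa (S.integr_tau_sq.const_mul 4)
    have s8 : (∫ x, 4 * S.τ x ^ 2 ∂μ) = 4 * ∫ x, S.τ x ^ 2 ∂μ := integral_const_mul 4 _
    have hval : (∫ x, (S.κ x - 4 * S.τ x ^ 2) ∂μ) = Kp - 4 * T := by
      rw [s7, s8]
    have hposint : 0 < ∫ x, (S.κ x - 4 * S.τ x ^ 2) ∂μ := by
      rw [integral_pos_iff_support_of_nonneg (fun x => le_of_lt (hpos x)) hint]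
      have hsupp : Function.support (fun x => S.κ x - 4 * S.τ x ^ 2) = Set.univ := by
        ext x
        simp [Function.mem_support, ne_of_gt (hpos x)]
      rw [hsupp, pos_iff_ne_zero]
      intro h0
      have hap := S.area_pos
      rw [hμ] at h0
      rw [h0] at hap
      simp at hap
    rw [hval] at hposint
    linarith
  -- final contradiction
  have hH2A : 0 ≤ S.H ^ 2 * A := mul_nonneg (sq_nonneg _) hA.le
  linarith
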